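/- Let H be a Hilbert space and T : H → H a unitary operator. Then the orthogonal complement of the closure of W = {T(u) − u : u ∈ H} equals the fixed-point subspace {y ∈ H : T(y) = y}, and for every v ∈ H the averages (1/(n+1)) ∑_{j=0}^n T^j(v) converge to the orthogonal projection of v onto the fixed-point subspace (von Neumann mean ergodic theorem). -/

import Mathlib

theorem mean_ergodic_unitary {𝕜 : Type*} [RCLike 𝕜] {H : Type*}
    [NormedAddCommGroup H] [InnerProductSpace 𝕜 H] [CompleteSpace H]
    (T : H →L[𝕜] H) (hsurj : Function.Surjective T)
    (hinner : ∀ v w : H, (inner 𝕜 (T v) (T w) : 𝕜) = inner 𝕜 v w) :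
    ((LinearMap.range ((T - 1 : H →L[𝕜] H) : H →ₗ[𝕜] H)).topologicalClosure)ᗮ = LinearMap.ker ((T - 1 : H →L[𝕜] H) : H →ₗ[𝕜] H) ∧
    (∀ v : H, ∃ w : H, w ∈ LinearMap.ker ((T - 1 : H →L[𝕜] H) : H →ₗ[𝕜] H) ∧
      v - w ∈ (LinearMap.ker ((T - 1 : H →L[𝕜] H) : H →ₗ[𝕜] H) : Submodule 𝕜 H)ᗮ ∧
      Filter.Tendsto
        (fun n : ℕ => ((n : 𝕜) + 1)⁻¹ • ∑ j ∈ Finset.range (n + 1), (T ^ j) v)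
        Filter.atTop (nhds w)) := by
  have hnormeq : ∀ v : H, ‖T v‖ = ‖v‖ := by
    intro v
    rw [norm_eq_sqrt_re_inner (𝕜 := 𝕜), norm_eq_sqrt_re_inner (𝕜 := 𝕜) v, hinner]
  have hnormle : ‖T‖ ≤ 1 :=
    T.opNorm_le_bound zero_le_one fun v => by rw [one_mul, hnormeq]
  have hfix : ∀ x : H, x ∈ LinearMap.ker ((T - 1 : H →L[𝕜] H) : H →ₗ[𝕜] H) ↔ T x = x := by
    intro x
    simp [LinearMap.mem_ker, sub_eq_zero]
  -- Part 1, without closure first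
  have h1 : (LinearMap.range ((T - 1 : H →L[𝕜] H) : H →ₗ[𝕜] H) : Submodule 𝕜 H)ᗮ = LinearMap.ker ((T - 1 : H →L[𝕜] H) : H →ₗ[𝕜] H) := by
    ext x
    rw [Submodule.mem_orthogonal, hfix]
    constructor
    · intro h
      obtain ⟨y, hy⟩ := hsurj x
      have key : ∀ u : H, (inner 𝕜 u (y - x) : 𝕜) = 0 := by
        intro u
        have h0 : (inner 𝕜 ((T - 1) u) x : 𝕜) = 0 := h _ (LinearMap.mem_range_self _ u)
        have : (inner 𝕜 (T u) x : 𝕜) - inner 𝕜 u x = 0 := by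
          simpa [inner_sub_left] using h0
        have h2 : (inner 𝕜 (T u) x : 𝕜) = inner 𝕜 u y := by rw [← hy, hinner]
        rw [h2] at this
        rw [inner_sub_right]
        linear_combination this
      have hyx : y - x = 0 := by
        have := key (y - x)
        simpa [inner_self_eq_zero] using this
      have hyx' : y = x := by rwa [sub_eq_zero] at hyx
      subst hyx'; exact hy
    · intro hT u hu
      obtain ⟨z, rfl⟩ := hu
      have : (((T - 1 : H →L[𝕜] H) : H →ₗ[𝕜] H) z : H) = T z - z := by simp
      rw [this, inner_sub_left, ← hT, hinner, hT, sub_self]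
  constructor
  · rw [← Submodule.orthogonal_orthogonal_eq_closure, Submodule.triorthogonal_eq_orthogonal, h1]
  · intro v
    have hloc : LinearMap.ker ((T - 1 : H →L[𝕜] H) : H →ₗ[𝕜] H) = T.eqLocus (1 : H →L[𝕜] H) := by
      ext x
      rw [hfix]
      exact Iff.rfl
    have hproj := T.tendsto_birkhoffAverage_orthogonalProjection (𝕜 := 𝕜) hnormle v
    set S := T.eqLocus (1 : H →L[𝕜] H) with hS
    refine ⟨(S.orthogonalProjectionOnto v : H), ?_, ?_, ?_⟩
    · rw [hloc]; exact (S.orthogonalProjectionOnto v).2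
    · rw [hloc]; exact Submodule.sub_starProjection_mem_orthogonal (K := S) v
    · have h2 := hproj.comp (Filter.tendsto_add_atTop_nat 1)
      have heq : (fun n : ℕ => ((n : 𝕜) + 1)⁻¹ • ∑ j ∈ Finset.range (n + 1), (T ^ j) v)
          = (fun N => birkhoffAverage 𝕜 (⇑T) _root_.id N v) ∘ (fun n => n + 1) := by
        funext n
        simp [birkhoffAverage, birkhoffSum, ContinuousLinearMap.coe_pow, Function.comp]
      rw [heq]
      exact h2
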